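/- Let X be an N×N real symmetric positive definite matrix and D a diagonal matrix with 0 ≺ D ≺ 2X^{-1}. Then every eigenvalue λ of the matrix J = I - X·D satisfies |λ| < 1, i.e., the spectral radius of J is strictly less than 1. -/

import Mathlib

open Matrix

open scoped ComplexOrder

lemma posDef_map_ofReal {n : ℕ} {M : Matrix (Fin n) (Fin n) ℝ} (hM : M.PosDef) :
    (M.map Complex.ofReal).PosDef := by
  have hsymm : ∀ i j, M i j = M j i := by
    intro i j
    have := congrFun (congrFun hM.1 i) j
    simpa [conjTranspose_apply] using this.symm
  have herm : (M.map Complex.ofReal).IsHermitian := by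
    ext i j
    simp only [conjTranspose_apply, Matrix.map_apply, RCLike.star_def, Complex.conj_ofReal]
    exact_mod_cast hsymm j i
  refine Matrix.PosDef.of_dotProduct_mulVec_pos herm fun x hx => ?_
  have expand : star x ⬝ᵥ ((M.map Complex.ofReal) *ᵥ x)
      = ∑ i, ∑ j, (starRingEnd ℂ) (x i) * ((M i j : ℂ) * x j) := by
    simp only [dotProduct, mulVec, Matrix.map_apply, Pi.star_apply, RCLike.star_def,
      Finset.mul_sum]
  have him : (star x ⬝ᵥ ((M.map Complex.ofReal) *ᵥ x)).im = 0 := by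
    rw [expand]
    have hS : (∑ i, ∑ j, ((starRingEnd ℂ) (x i) * ((M i j : ℂ) * x j)).im)
        = -(∑ i, ∑ j, ((starRingEnd ℂ) (x i) * ((M i j : ℂ) * x j)).im) := by
      conv_rhs => rw [Finset.sum_comm]
      rw [← Finset.sum_neg_distrib]
      refine Finset.sum_congr rfl fun i _ => ?_
      rw [← Finset.sum_neg_distrib]
      refine Finset.sum_congr rfl fun j _ => ?_
      rw [hsymm i j]
      simp only [Complex.mul_im, Complex.mul_re, Complex.conj_re, Complex.conj_im,
        Complex.ofReal_re, Complex.ofReal_im]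
      ring
    simp only [Complex.im_sum]
    linarith [hS]
  have hre : (star x ⬝ᵥ ((M.map Complex.ofReal) *ᵥ x)).re
      = (fun i => (x i).re) ⬝ᵥ (M *ᵥ fun i => (x i).re)
        + (fun i => (x i).im) ⬝ᵥ (M *ᵥ fun i => (x i).im) := by
    rw [expand]
    simp only [dotProduct, mulVec, Finset.mul_sum, Complex.re_sum, ← Finset.sum_add_distrib]
    refine Finset.sum_congr rfl fun i _ => ?_
    refine Finset.sum_congr rfl fun j _ => ?_
    simp only [Complex.mul_re, Complex.mul_im, Complex.conj_re, Complex.conj_im,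
      Complex.ofReal_re, Complex.ofReal_im]
    ring
  have hab : (fun i => (x i).re) ≠ 0 ∨ (fun i => (x i).im) ≠ 0 := by
    by_contra h
    push_neg at h
    apply hx
    funext i
    exact Complex.ext (congrFun h.1 i) (congrFun h.2 i)
  have hpos : 0 < (star x ⬝ᵥ ((M.map Complex.ofReal) *ᵥ x)).re := by
    rw [hre]
    rcases hab with h | h
    · have h1 := hM.dotProduct_mulVec_pos h
      have h2 := hM.posSemidef.dotProduct_mulVec_nonneg (fun i => (x i).im)
      simp only [star_trivial] at h1 h2
      linarith
    · have h1 := hM.dotProduct_mulVec_pos h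
      have h2 := hM.posSemidef.dotProduct_mulVec_nonneg (fun i => (x i).re)
      simp only [star_trivial] at h1 h2
      linarith
  rw [Complex.lt_def]
  exact ⟨by simpa using hpos, by simp [him]⟩

/-- If `X` is symmetric positive definite and `D` is diagonal with
`0 ≺ D ≺ 2X⁻¹`, then every (complex) eigenvalue of `J = I - X·D` has
modulus strictly less than 1. -/
theorem spectral_radius_lt_one {N : ℕ} (X : Matrix (Fin N) (Fin N) ℝ)
    (hX : X.PosDef) (d : Fin N → ℝ) (hd : ∀ i, 0 < d i)
    (hDX : ((2 : ℝ) • X⁻¹ - Matrix.diagonal d).PosDef) :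
    ∀ lam : ℂ,
      lam ∈ spectrum ℂ (((1 : Matrix (Fin N) (Fin N) ℝ)
          - X * Matrix.diagonal d).map Complex.ofReal) →
      ‖lam‖ < 1 := by
  intro lam hlam
  classical
  set Xc := X.map Complex.ofReal with hXcdef
  set Dc := (Matrix.diagonal d).map Complex.ofReal with hDcdef
  -- get an eigenvector
  rw [← AlgEquiv.spectrum_eq (Matrix.toLinAlgEquiv' :
        Matrix (Fin N) (Fin N) ℂ ≃ₐ[ℂ] _),
    ← Module.End.hasEigenvalue_iff_mem_spectrum] at hlam
  obtain ⟨v, hv⟩ := hlam.exists_hasEigenvector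
  have hv0 : v ≠ 0 := hv.right
  have heig0 : (((1 : Matrix (Fin N) (Fin N) ℝ)
      - X * Matrix.diagonal d).map Complex.ofReal) *ᵥ v = lam • v := by
    have := hv.apply_eq_smul
    simpa [Matrix.toLinAlgEquiv'_apply, Matrix.mulVecLin_apply] using this
  have hmapA : ((1 : Matrix (Fin N) (Fin N) ℝ)
      - X * Matrix.diagonal d).map Complex.ofReal = 1 - Xc * Dc := by
    have : ∀ B : Matrix (Fin N) (Fin N) ℝ,
        B.map Complex.ofReal = Complex.ofRealHom.mapMatrix B := fun _ => rfl
    rw [this, map_sub, _root_.map_mul, _root_.map_one]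
    rfl
  set μ : ℂ := 1 - lam with hμdef
  set u : Fin N → ℂ := Dc *ᵥ v with hudef
  have heig : Xc *ᵥ u = μ • v := by
    rw [hmapA, sub_mulVec, one_mulVec] at heig0
    rw [hudef, mulVec_mulVec]
    have : (Xc * Dc) *ᵥ v = v - lam • v := by
      rw [← heig0]; abel
    rw [this, hμdef, sub_smul, one_smul]
  have hDc : Dc = Matrix.diagonal (fun i => (d i : ℂ)) := by
    rw [hDcdef, diagonal_map (by simp)]
  have hu0 : u ≠ 0 := by
    intro h
    apply hv0
    funext i
    have := congrFun h i
    simp only [hudef, hDc, mulVec_diagonal, Pi.zero_apply] at this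
    have hdi : (d i : ℂ) ≠ 0 := by exact_mod_cast (hd i).ne'
    simpa [hdi] using this
  set ar : ℝ := ∑ i, d i * Complex.normSq (v i) with hardef
  have har : 0 < ar := by
    obtain ⟨i, hi⟩ := Function.ne_iff.mp hv0
    refine Finset.sum_pos' (fun j _ => mul_nonneg (hd j).le (Complex.normSq_nonneg _)) ⟨i, Finset.mem_univ i, ?_⟩
    exact mul_pos (hd i) (Complex.normSq_pos.mpr hi)
  have h1 : star u ⬝ᵥ v = (ar : ℂ) := by
    simp only [hudef, hDc, dotProduct, Pi.star_apply, mulVec_diagonal, hardef,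
      Complex.ofReal_sum, star_mul', RCLike.star_def, Complex.conj_ofReal]
    refine Finset.sum_congr rfl fun i _ => ?_
    rw [Complex.ofReal_mul, Complex.normSq_eq_conj_mul_self]
    ring
  have h2 : star v ⬝ᵥ u = (ar : ℂ) := by
    simp only [hudef, hDc, dotProduct, Pi.star_apply, mulVec_diagonal, hardef,
      Complex.ofReal_sum, RCLike.star_def]
    refine Finset.sum_congr rfl fun i _ => ?_
    rw [Complex.ofReal_mul, Complex.normSq_eq_conj_mul_self]
    ring
  have hq : star u ⬝ᵥ (Xc *ᵥ u) = μ * (ar : ℂ) := by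
    rw [heig, dotProduct_smul, h1, smul_eq_mul]
  have hXc : Xc.PosDef := posDef_map_ofReal hX
  have hqpos : (0 : ℂ) < μ * (ar : ℂ) := hq ▸ hXc.dotProduct_mulVec_pos hu0
  rw [Complex.lt_def] at hqpos
  simp only [Complex.zero_re, Complex.zero_im, Complex.mul_re, Complex.mul_im,
    Complex.ofReal_re, Complex.ofReal_im, mul_zero, zero_mul, sub_zero, add_zero] at hqpos
  have hμim : μ.im = 0 := by
    have h := hqpos.2
    have h' : μ.im * ar = 0 := by linarith
    rcases mul_eq_zero.mp h' with h'' | h''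
    · exact h''
    · exact absurd h'' har.ne'
  set t : ℝ := μ.re with htdef
  have ht0 : 0 < t := by
    have := hqpos.1
    nlinarith
  have hμt : μ = (t : ℂ) := Complex.ext rfl (by simp [hμim])
  -- now show t < 2
  have hdet : IsUnit X.det := (ne_of_gt hX.det_pos).isUnit
  have hinvmul : (X⁻¹).map Complex.ofReal * Xc = 1 := by
    show Complex.ofRealHom.mapMatrix X⁻¹ * Complex.ofRealHom.mapMatrix X = 1
    rw [← _root_.map_mul, Matrix.nonsing_inv_mul X hdet, _root_.map_one]
  have hμne : μ ≠ 0 := by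
    rw [hμt]; exact_mod_cast ht0.ne'
  have hXinv_v : (X⁻¹).map Complex.ofReal *ᵥ v = μ⁻¹ • u := by
    have h3 : (X⁻¹).map Complex.ofReal *ᵥ (Xc *ᵥ u) = u := by
      rw [mulVec_mulVec, hinvmul, one_mulVec]
    rw [heig, mulVec_smul] at h3
    calc (X⁻¹).map Complex.ofReal *ᵥ v
        = μ⁻¹ • (μ • ((X⁻¹).map Complex.ofReal *ᵥ v)) := by
          rw [smul_smul, inv_mul_cancel₀ hμne, one_smul]
      _ = μ⁻¹ • u := by rw [h3]
  have hvXinvv : star v ⬝ᵥ ((X⁻¹).map Complex.ofReal *ᵥ v) = (μ⁻¹ : ℂ) * (ar : ℂ) := by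
    rw [hXinv_v, dotProduct_smul, h2, smul_eq_mul]
  have hDXc : (((2 : ℝ) • X⁻¹ - Matrix.diagonal d).map Complex.ofReal).PosDef :=
    posDef_map_ofReal hDX
  have hmap2 : ((2 : ℝ) • X⁻¹ - Matrix.diagonal d).map Complex.ofReal
      = (2 : ℂ) • ((X⁻¹).map Complex.ofReal) - Dc := by
    ext i j
    simp only [Matrix.map_apply, Matrix.sub_apply, Matrix.smul_apply, smul_eq_mul,
      Complex.ofReal_sub, Complex.ofReal_mul, Complex.ofReal_ofNat]
    rfl
  have hquad : (0 : ℂ) < star v ⬝ᵥ ((((2 : ℝ) • X⁻¹ - Matrix.diagonal d).map Complex.ofReal) *ᵥ v) :=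
    hDXc.dotProduct_mulVec_pos hv0
  rw [hmap2, sub_mulVec, smul_mulVec, dotProduct_sub, dotProduct_smul,
    hvXinvv, h2, smul_eq_mul, hμt] at hquad
  rw [Complex.lt_def] at hquad
  have hlt : 0 < 2 * (t⁻¹ * ar) - ar := by
    have := hquad.1
    simpa [Complex.mul_re, Complex.mul_im] using this
  have ht2 : t < 2 := by
    have h2t : 2 * (t⁻¹ * ar) > ar := by linarith
    have : 2 * t⁻¹ > 1 := by
      by_contra hcon
      push_neg at hcon
      nlinarith [mul_le_mul_of_nonneg_right hcon har.le]
    calc t = t * 1 := (mul_one t).symm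
      _ < t * (2 * t⁻¹) := by exact mul_lt_mul_of_pos_left this ht0
      _ = 2 := by field_simp
  -- conclude
  have hlamval : lam = ((1 - t : ℝ) : ℂ) := by
    have : lam = 1 - μ := by rw [hμdef]; ring
    rw [this, hμt]
    push_cast
    ring
  rw [hlamval, Complex.norm_real, Real.norm_eq_abs]
  rw [abs_lt]
  constructor <;> linarith
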